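/- On the interval Ω = (−1,1) ⊂ ℝ, the function u₂(x) = ½x² − ½ vanishes at x = ±1 and is a viscosity solution of (u')²u'' − |u'|² = 0 on (−1,1), yet u₂ is not an absolute minimizer for H(p,z) = ½p² − z on (−1,1): indeed esssup_{x ∈ (−1,1)} (½(u₂'(x))² − u₂(x)) = ½ > 0 = esssup_{x ∈ (−1,1)} (½·0² − 0), while the zero function has the same boundary values. -/

import Mathlib

open Set MeasureTheory

noncomputable section

/-- `u` is a viscosity subsolution of `(u')²u'' - |u'|² = 0` on `Ω ⊆ ℝ`. -/
def IsSubsol1 (Ω : Set ℝ) (u : ℝ → ℝ) : Prop :=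
  ∀ φ : ℝ → ℝ, ContDiff ℝ 2 φ → ∀ x₀ ∈ Ω,
    IsLocalMaxOn (fun x => u x - φ x) Ω x₀ →
    (deriv φ x₀) ^ 2 * deriv (deriv φ) x₀ - |deriv φ x₀| ^ 2 ≥ 0

/-- `u` is a viscosity supersolution of `(u')²u'' - |u'|² = 0` on `Ω ⊆ ℝ`. -/
def IsSupersol1 (Ω : Set ℝ) (u : ℝ → ℝ) : Prop :=
  ∀ φ : ℝ → ℝ, ContDiff ℝ 2 φ → ∀ x₀ ∈ Ω,
    IsLocalMinOn (fun x => u x - φ x) Ω x₀ →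
    (deriv φ x₀) ^ 2 * deriv (deriv φ) x₀ - |deriv φ x₀| ^ 2 ≤ 0

/-- `u` is a viscosity solution of `(u')²u'' - |u'|² = 0` on `Ω ⊆ ℝ`. -/
def IsSol1 (Ω : Set ℝ) (u : ℝ → ℝ) : Prop :=
  IsSubsol1 Ω u ∧ IsSupersol1 Ω u

/-- `u` is an absolute minimizer for the Hamiltonian `H = H(p, z)` on `Ω ⊆ ℝ`. -/
def IsAbsMin1 (H : ℝ → ℝ → ℝ) (Ω : Set ℝ) (u : ℝ → ℝ) : Prop :=
  ∀ V : Set ℝ, IsOpen V → closure V ⊆ Ω →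
    ∀ v : ℝ → ℝ, (∃ K : NNReal, LipschitzOnWith K v (closure V)) →
      (∀ x ∈ frontier V, v x = u x) →
      essSup (fun x => H (deriv u x) (u x)) (volume.restrict V) ≤
        essSup (fun x => H (deriv v x) (v x)) (volume.restrict V)

lemma second_deriv_nonpos_of_isLocalMax {g : ℝ → ℝ} {x₀ : ℝ}
    (hg : Differentiable ℝ g) (hmax : IsLocalMax g x₀) :
    deriv (deriv g) x₀ ≤ 0 := by
  by_contra h
  push_neg at h
  -- deriv g x₀ = 0
  have h0 : deriv g x₀ = 0 := hmax.deriv_eq_zero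
  by_cases hd : DifferentiableAt ℝ (deriv g) x₀
  · have hslope : Filter.Tendsto (slope (deriv g) x₀) (nhdsWithin x₀ {x₀}ᶜ)
        (nhds (deriv (deriv g) x₀)) :=
      (hasDerivAt_iff_tendsto_slope.mp hd.hasDerivAt)
    have hpos : ∀ᶠ x in nhdsWithin x₀ {x₀}ᶜ, 0 < slope (deriv g) x₀ x :=
      hslope.eventually (eventually_gt_nhds h)
    -- on the right of x₀, deriv g > 0
    have hright : ∀ᶠ x in nhdsWithin x₀ (Ioi x₀), 0 < deriv g x := by
      have h1 : ∀ᶠ x in nhdsWithin x₀ (Ioi x₀), 0 < slope (deriv g) x₀ x :=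
        nhdsWithin_mono x₀ (fun x hx => ne_of_gt hx) hpos
      filter_upwards [h1, self_mem_nhdsWithin] with x hx hx'
      rw [slope_def_field, div_eq_inv_mul, h0, sub_zero] at hx
      have hxx : 0 < x - x₀ := sub_pos.mpr hx'
      have h2 := mul_pos hxx hx
      rwa [← mul_assoc, mul_inv_cancel₀ (ne_of_gt hxx), one_mul] at h2
    rw [eventually_nhdsWithin_iff] at hright
    obtain ⟨ε, hε, hball⟩ := Metric.eventually_nhds_iff_ball.mp hright
    obtain ⟨δ, hδ, hmaxball⟩ := Metric.eventually_nhds_iff_ball.mp hmax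
    set y := x₀ + min ε δ / 2 with hy
    have hmin : 0 < min ε δ := lt_min hε hδ
    have hyx : x₀ < y := by
      have : (0:ℝ) < min ε δ / 2 := by positivity
      rw [hy]; linarith
    have hsm : StrictMonoOn g (Icc x₀ y) := by
      apply strictMonoOn_of_deriv_pos (convex_Icc _ _) (hg.continuous.continuousOn)
      intro x hx
      rw [interior_Icc] at hx
      apply hball x
      · rw [Metric.mem_ball, Real.dist_eq, abs_of_pos (sub_pos.mpr hx.1)]
        have : x < y := hx.2
        have : x - x₀ < min ε δ / 2 := by simp [hy] at this; linarith
        linarith [min_le_left ε δ]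
      · exact hx.1
    have hgy : g x₀ < g y := hsm (left_mem_Icc.mpr hyx.le) (right_mem_Icc.mpr hyx.le) hyx
    have : g y ≤ g x₀ := by
      apply hmaxball
      rw [Metric.mem_ball, Real.dist_eq, hy]
      have : |x₀ + min ε δ / 2 - x₀| = min ε δ / 2 := by
        rw [add_sub_cancel_left, abs_of_pos (by positivity)]
      rw [this]
      linarith [min_le_right ε δ]
    linarith
  · rw [deriv_zero_of_not_differentiableAt hd] at h; linarith

lemma second_deriv_nonneg_of_isLocalMin {g : ℝ → ℝ} {x₀ : ℝ}
    (hg : Differentiable ℝ g) (hmin : IsLocalMin g x₀) :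
    0 ≤ deriv (deriv g) x₀ := by
  have := second_deriv_nonpos_of_isLocalMax (g := -g) hg.neg hmin.neg
  have hd1 : deriv (-g) = -deriv g := by
    funext x; exact deriv.neg
  rw [hd1] at this
  have hd2 : deriv (-deriv g) x₀ = -deriv (deriv g) x₀ := deriv.neg
  rw [hd2] at this
  linarith

lemma hasDerivAt_u (x : ℝ) : HasDerivAt (fun x : ℝ => (1 / 2) * x ^ 2 - 1 / 2) x x := by
  have h := (((hasDerivAt_pow 2 x).const_mul ((1:ℝ)/2)).sub_const (1/2))
  refine h.congr_deriv ?_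
  norm_num; ring

lemma deriv_u : deriv (fun x : ℝ => (1 / 2) * x ^ 2 - 1 / 2) = fun x => x :=
  funext fun x => (hasDerivAt_u x).deriv

lemma contDiff_deriv_phi {φ : ℝ → ℝ} (hφ : ContDiff ℝ 2 φ) : ContDiff ℝ 1 (deriv φ) := by
  have h2 : ContDiff ℝ (1 + 1) φ := by norm_num; exact hφ
  exact (contDiff_succ_iff_deriv.mp h2).2.2

lemma localize {g : ℝ → ℝ} {x₀ : ℝ} (hx₀ : x₀ ∈ Ioo (-1:ℝ) 1)
    (h : IsLocalMaxOn g (Ioo (-1:ℝ) 1) x₀) : IsLocalMax g x₀ := by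
  have hn : nhdsWithin x₀ (Ioo (-1:ℝ) 1) = nhds x₀ :=
    nhdsWithin_eq_nhds.mpr (isOpen_Ioo.mem_nhds hx₀)
  show IsMaxFilter g (nhds x₀) x₀
  rw [← hn]; exact h

lemma localize_min {g : ℝ → ℝ} {x₀ : ℝ} (hx₀ : x₀ ∈ Ioo (-1:ℝ) 1)
    (h : IsLocalMinOn g (Ioo (-1:ℝ) 1) x₀) : IsLocalMin g x₀ := by
  have hn : nhdsWithin x₀ (Ioo (-1:ℝ) 1) = nhds x₀ :=
    nhdsWithin_eq_nhds.mpr (isOpen_Ioo.mem_nhds hx₀)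
  show IsMinFilter g (nhds x₀) x₀
  rw [← hn]; exact h

lemma key_derivs {φ : ℝ → ℝ} (hφ : ContDiff ℝ 2 φ) (x₀ : ℝ)
    (hg0 : deriv (fun x => ((1 / 2) * x ^ 2 - 1 / 2) - φ x) x₀ = 0) :
    deriv φ x₀ = x₀ ∧
    deriv (deriv (fun x => ((1 / 2) * x ^ 2 - 1 / 2) - φ x)) x₀ =
      1 - deriv (deriv φ) x₀ := by
  have hφd : Differentiable ℝ φ := hφ.differentiable two_ne_zero
  have hφ'd : Differentiable ℝ (deriv φ) :=
    (contDiff_deriv_phi hφ).differentiable one_ne_zero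
  have hdg : deriv (fun x => ((1 / 2) * x ^ 2 - 1 / 2) - φ x) = fun x => x - deriv φ x := by
    funext x
    rw [deriv_fun_sub (hasDerivAt_u x).differentiableAt (hφd x), (hasDerivAt_u x).deriv]
  constructor
  · replace hg0 : x₀ - deriv φ x₀ = 0 := by rw [hdg] at hg0; exact hg0
    linarith
  · rw [hdg]
    exact ((hasDerivAt_id x₀).sub (hφ'd x₀).hasDerivAt).deriv

theorem example_not_absolute_minimizer' :
    IsSol1 (Set.Ioo (-1 : ℝ) 1) (fun x => (1 / 2) * x ^ 2 - 1 / 2) := by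
  constructor
  · intro φ hφ x₀ hx₀ hmax
    have hmax' := localize hx₀ hmax
    have hφd : Differentiable ℝ φ := hφ.differentiable two_ne_zero
    have hg : Differentiable ℝ (fun x => ((1 / 2) * x ^ 2 - 1 / 2) - φ x) :=
      (Differentiable.sub (fun x => (hasDerivAt_u x).differentiableAt) hφd)
    obtain ⟨h1, h2⟩ := key_derivs hφ x₀ hmax'.deriv_eq_zero
    have hsec := second_deriv_nonpos_of_isLocalMax hg hmax'
    rw [h2] at hsec
    rw [ge_iff_le, sq_abs]
    nlinarith [sq_nonneg (deriv φ x₀)]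
  · intro φ hφ x₀ hx₀ hmin
    have hmin' := localize_min hx₀ hmin
    have hφd : Differentiable ℝ φ := hφ.differentiable two_ne_zero
    have hg : Differentiable ℝ (fun x => ((1 / 2) * x ^ 2 - 1 / 2) - φ x) :=
      (Differentiable.sub (fun x => (hasDerivAt_u x).differentiableAt) hφd)
    obtain ⟨h1, h2⟩ := key_derivs hφ x₀ hmin'.deriv_eq_zero
    have hsec := second_deriv_nonneg_of_isLocalMin hg hmin'
    rw [h2] at hsec
    rw [sq_abs]
    nlinarith [sq_nonneg (deriv φ x₀)]

lemma restrict_ne_zero {a b : ℝ} (h : a < b) :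
    (volume.restrict (Ioo a b)) ≠ 0 := by
  rw [Ne, Measure.restrict_eq_zero, Real.volume_Ioo]
  simp [sub_eq_zero]
  linarith

theorem not_abs_min :
    ¬ IsAbsMin1 (fun p z => (1 / 2) * p ^ 2 - z) (Set.Ioo (-1 : ℝ) 1)
        (fun x => (1 / 2) * x ^ 2 - 1 / 2) := by
  intro h
  have hcl : closure (Ioo (-(1:ℝ)/2) (1/2)) ⊆ Ioo (-1:ℝ) 1 := by
    rw [closure_Ioo (by norm_num : (-(1:ℝ)/2) ≠ 1/2)]
    intro x hx
    simp only [mem_Icc] at hx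
    rw [mem_Ioo]
    exact ⟨by linarith [hx.1], by linarith [hx.2]⟩
  have hfr : ∀ x ∈ frontier (Ioo (-(1:ℝ)/2) (1/2)),
      (fun _ : ℝ => (-(3:ℝ)/8)) x = (fun x : ℝ => (1 / 2) * x ^ 2 - 1 / 2) x := by
    rw [frontier_Ioo (by norm_num : (-(1:ℝ)/2) < 1/2)]
    intro x hx
    rcases hx with hx | hx <;> simp_all <;> norm_num
  have key := h (Ioo (-(1:ℝ)/2) (1/2)) isOpen_Ioo hcl (fun _ => (-(3:ℝ)/8))
    ⟨0, fun x _ y _ => by simp⟩ hfr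
  have hlhs : (fun x : ℝ => (1/2 : ℝ) * (deriv (fun x : ℝ => (1 / 2) * x ^ 2 - 1 / 2) x) ^ 2 -
      ((1 / 2) * x ^ 2 - 1 / 2)) = fun _ => (1/2 : ℝ) := by
    funext x; rw [deriv_u]; ring
  have hrhs : (fun x : ℝ => (1/2 : ℝ) * (deriv (fun _ : ℝ => (-(3:ℝ)/8)) x) ^ 2 -
      (-(3:ℝ)/8)) = fun _ => (3/8 : ℝ) := by
    funext x; rw [deriv_const']; ring
  simp only [] at key
  rw [hlhs, hrhs, essSup_const _ (restrict_ne_zero (by norm_num)),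
    essSup_const _ (restrict_ne_zero (by norm_num))] at key
  linarith

/-- Example I continued: `u₂ = ½x² - ½` vanishes at `±1` and solves the
Aronsson equation on `(-1,1)`, but it is not an absolute minimizer for
`H(p,z) = ½p² - z`: its energy `esssup (½(u₂')² - u₂) = ½ > 0`, while the zero function,
with the same boundary values, has energy `0`. -/
theorem example_not_absolute_minimizer :
    (fun x : ℝ => (1 / 2) * x ^ 2 - 1 / 2) (-1) = 0 ∧
    (fun x : ℝ => (1 / 2) * x ^ 2 - 1 / 2) 1 = 0 ∧
    IsSol1 (Set.Ioo (-1 : ℝ) 1) (fun x => (1 / 2) * x ^ 2 - 1 / 2) ∧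
    ¬ IsAbsMin1 (fun p z => (1 / 2) * p ^ 2 - z) (Set.Ioo (-1 : ℝ) 1)
        (fun x => (1 / 2) * x ^ 2 - 1 / 2) ∧
    essSup
      (fun x => (1 / 2) * (deriv (fun y : ℝ => (1 / 2) * y ^ 2 - 1 / 2) x) ^ 2 -
        ((1 / 2) * x ^ 2 - 1 / 2))
      (volume.restrict (Set.Ioo (-1 : ℝ) 1)) = 1 / 2 ∧
    (1 / 2 : ℝ) > 0 ∧
    essSup
      (fun x => (1 / 2) * (deriv (fun _ : ℝ => (0 : ℝ)) x) ^ 2 - (0 : ℝ))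
      (volume.restrict (Set.Ioo (-1 : ℝ) 1)) = 0 := by
  refine ⟨by norm_num, by norm_num, example_not_absolute_minimizer', not_abs_min, ?_, by norm_num, ?_⟩
  · have hlhs : (fun x : ℝ => (1/2 : ℝ) * (deriv (fun y : ℝ => (1 / 2) * y ^ 2 - 1 / 2) x) ^ 2 -
        ((1 / 2) * x ^ 2 - 1 / 2)) = fun _ => (1/2 : ℝ) := by
      funext x; rw [deriv_u]; ring
    rw [hlhs, essSup_const _ (restrict_ne_zero (by norm_num))]
  · have hrhs : (fun x : ℝ => (1/2 : ℝ) * (deriv (fun _ : ℝ => (0:ℝ)) x) ^ 2 - (0:ℝ)) =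
        fun _ => (0 : ℝ) := by
      funext x; rw [deriv_const']; ring
    rw [hrhs, essSup_const _ (restrict_ne_zero (by norm_num))]
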